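/- Let f₁, f₂, … be convex functions ℝ → ℝ converging pointwise to a convex function f on an open interval O. If f is differentiable at s ∈ O, then for every ε > 0 there exists N such that for all d ≥ N, every subgradient of f_d at s lies within ε of f'(s); in particular the derivatives (where they exist) of f_d at s converge to f'(s). -/
import Mathlib


/-- Let `f_d` be convex functions converging pointwise on an open set `O` to
a convex `f`, differentiable at `s ∈ O` with derivative `f'`. Then for every `ε > 0`
there is `N` such that for all `d ≥ N`, every subgradient `y` of `f_d` at `s` (i.e. every
`y` with `f_d s + y (x − s) ≤ f_d x` for all `x`) satisfies `|y − f'| ≤ ε`. -/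
theorem subgradient_convergence (fseq : ℕ → ℝ → ℝ) (f : ℝ → ℝ) (O : Set ℝ)
    (hO : IsOpen O)
    (hconv : ∀ d, ConvexOn ℝ Set.univ (fseq d))
    (hfconv : ConvexOn ℝ Set.univ f)
    (hlim : ∀ x ∈ O, Filter.Tendsto (fun d => fseq d x) Filter.atTop (nhds (f x)))
    (s : ℝ) (hs : s ∈ O) (f' : ℝ) (hdiff : HasDerivAt f f' s) :
    ∀ ε > (0 : ℝ), ∃ N : ℕ, ∀ d ≥ N, ∀ y : ℝ,
      (∀ x : ℝ, fseq d s + y * (x - s) ≤ fseq d x) → |y - f'| ≤ ε := by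
  intro ε hε
  have hslope : Filter.Tendsto (slope f s) (nhdsWithin s {s}ᶜ) (nhds f') :=
    hasDerivAt_iff_tendsto_slope.mp hdiff
  rw [Metric.tendsto_nhdsWithin_nhds] at hslope
  obtain ⟨δ₁, hδ₁, hδ⟩ := hslope (ε / 2) (by linarith)
  obtain ⟨δ₂, hδ₂, hball⟩ := Metric.isOpen_iff.mp hO s hs
  set h : ℝ := min δ₁ δ₂ / 2 with hh
  have hh0 : 0 < h := by positivity
  have hh1 : h < δ₁ := by
    have := min_le_left δ₁ δ₂; simp only [hh]; linarith
  have hh2 : h < δ₂ := by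
    have := min_le_right δ₁ δ₂; simp only [hh]; linarith
  have hp : s + h ∈ O := hball (by
    simp [Metric.mem_ball, Real.dist_eq, abs_of_pos hh0]; linarith)
  have hm : s - h ∈ O := hball (by
    simp [Metric.mem_ball, Real.dist_eq, abs_of_pos hh0]; linarith)
  have hsp : |(f (s + h) - f s) / h - f'| < ε / 2 := by
    have h1 : s + h ∈ ({s}ᶜ : Set ℝ) := by
      simp; intro hc; nlinarith
    have h2 : dist (s + h) s < δ₁ := by
      simp [Real.dist_eq, abs_of_pos hh0]; linarith
    have := hδ h1 h2
    rw [Real.dist_eq] at this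
    have hsl : slope f s (s + h) = (f (s + h) - f s) / h := by
      rw [slope_def_field]; ring_nf
    rwa [hsl] at this
  have hsm : |(f (s - h) - f s) / (-h) - f'| < ε / 2 := by
    have h1 : s - h ∈ ({s}ᶜ : Set ℝ) := by
      simp; intro hc; nlinarith
    have h2 : dist (s - h) s < δ₁ := by
      simp [Real.dist_eq, abs_of_pos hh0]; linarith
    have := hδ h1 h2
    rw [Real.dist_eq] at this
    have hsl : slope f s (s - h) = (f (s - h) - f s) / (-h) := by
      rw [slope_def_field]; ring_nf
    rwa [hsl] at this
  have hc0 : (0 : ℝ) < ε * h / 8 := by positivity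
  obtain ⟨N₁, hN₁⟩ := Metric.tendsto_atTop.mp (hlim s hs) (ε * h / 8) hc0
  obtain ⟨N₂, hN₂⟩ := Metric.tendsto_atTop.mp (hlim (s + h) hp) (ε * h / 8) hc0
  obtain ⟨N₃, hN₃⟩ := Metric.tendsto_atTop.mp (hlim (s - h) hm) (ε * h / 8) hc0
  refine ⟨max N₁ (max N₂ N₃), fun d hd y hy => ?_⟩
  have hd1 := hN₁ d (le_trans (le_max_left _ _) hd)
  have hd2 := hN₂ d (le_trans (le_trans (le_max_left _ _) (le_max_right N₁ _)) hd)
  have hd3 := hN₃ d (le_trans (le_trans (le_max_right _ _) (le_max_right N₁ _)) hd)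
  rw [Real.dist_eq] at hd1 hd2 hd3
  have e1 := abs_lt.mp hd1
  have e2 := abs_lt.mp hd2
  have e3 := abs_lt.mp hd3
  have hy1 : fseq d s + y * h ≤ fseq d (s + h) := by
    have := hy (s + h); simpa using this
  have hy2 : fseq d s + y * (-h) ≤ fseq d (s - h) := by
    have := hy (s - h)
    have heq : s - h - s = -h := by ring
    rwa [heq] at this
  have hq1 : f (s + h) - f s < h * (f' + ε / 2) := by
    have := (abs_lt.mp hsp).2
    have := (div_lt_iff₀ hh0).mp (by linarith : (f (s + h) - f s) / h < f' + ε / 2)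
    linarith [this]
  have hq2 : f (s - h) - f s < -h * (f' - ε / 2) := by
    have hlt := (abs_lt.mp hsm).1
    have : f' - ε / 2 < (f (s - h) - f s) / (-h) := by linarith
    have := (lt_div_iff_of_neg (by linarith : -h < 0)).mp this
    linarith
  rw [abs_le]
  constructor
  · nlinarith [e1.1, e1.2, e3.1, e3.2, hy2, hq2, hh0, hε]
  · nlinarith [e1.1, e1.2, e2.1, e2.2, hy1, hq1, hh0, hε]
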